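/- For p, q ∈ (0,1) define the binary KL divergence D(p‖q) = p·log(p/q) + (1-p)·log((1-p)/(1-q)), and for δ > 0 define g_δ(q) = inf{p ∈ [0,1] : D(p‖q) ≤ δ}. Then g_δ is nondecreasing in q on (0,1). -/

import Mathlib

/-- Binary KL divergence `D(p‖q) = p·log(p/q) + (1-p)·log((1-p)/(1-q))`
(with the convention `0·log 0 = 0`, which holds for `Real.log 0 = 0`). -/
noncomputable def bernKL (p q : ℝ) : ℝ :=
  p * Real.log (p / q) + (1 - p) * Real.log ((1 - p) / (1 - q))

/-- Lower endpoint of the binary-KL ball of radius `δ` around `q`. -/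
noncomputable def gKL (δ q : ℝ) : ℝ :=
  sInf {p : ℝ | p ∈ Set.Icc (0 : ℝ) 1 ∧ bernKL p q ≤ δ}

lemma gibbs {a b : ℝ} (ha0 : 0 < a) (ha1 : a < 1) (hb0 : 0 < b) (hb1 : b < 1) :
    0 ≤ a * Real.log (a / b) + (1 - a) * Real.log ((1 - a) / (1 - b)) := by
  have h1 : Real.log (b / a) ≤ b / a - 1 := Real.log_le_sub_one_of_pos (by positivity)
  have h2 : Real.log ((1 - b) / (1 - a)) ≤ (1 - b) / (1 - a) - 1 :=
    Real.log_le_sub_one_of_pos (by apply div_pos <;> linarith)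
  have e1 : Real.log (b / a) = - Real.log (a / b) := by
    rw [← Real.log_inv, inv_div]
  have e2 : Real.log ((1 - b) / (1 - a)) = - Real.log ((1 - a) / (1 - b)) := by
    rw [← Real.log_inv, inv_div]
  rw [e1] at h1; rw [e2] at h2
  have c1 : a * (-Real.log (a / b)) ≤ a * (b / a - 1) :=
    mul_le_mul_of_nonneg_left h1 ha0.le
  have c2 : (1 - a) * (-Real.log ((1 - a) / (1 - b))) ≤ (1 - a) * ((1 - b) / (1 - a) - 1) :=
    mul_le_mul_of_nonneg_left h2 (by linarith)
  have d1 : a * (b / a - 1) = b - a := by field_simp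
  have d2 : (1 - a) * ((1 - b) / (1 - a) - 1) = a - b := by
    have h : (1:ℝ) - a ≠ 0 := by linarith
    field_simp
    ring
  nlinarith

lemma bernKL_mono {p q₁ q₂ : ℝ} (hq₁ : 0 < q₁) (hq₂ : q₂ < 1) (h : q₁ ≤ q₂)
    (hp0 : 0 ≤ p) (hpq : p ≤ q₁) : bernKL p q₁ ≤ bernKL p q₂ := by
  have hq₁1 : q₁ < 1 := lt_of_le_of_lt h hq₂
  have hq₂0 : 0 < q₂ := lt_of_lt_of_le hq₁ h
  rcases eq_or_lt_of_le hp0 with rfl | hp0'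
  · simp only [bernKL, zero_mul, zero_add, sub_zero, one_mul]
    apply Real.log_le_log (by apply div_pos <;> linarith)
    apply div_le_div_of_nonneg_left (by norm_num) (by linarith) (by linarith)
  · have hp1 : p < 1 := lt_of_le_of_lt hpq hq₁1
    have hA : Real.log q₁ - Real.log q₂ ≤ 0 := by
      have := Real.log_le_log hq₁ h; linarith
    have hB : 0 ≤ Real.log (1 - q₁) - Real.log (1 - q₂) := by
      have := Real.log_le_log (by linarith : (0:ℝ) < 1 - q₂) (by linarith : 1 - q₂ ≤ 1 - q₁)
      linarith
    have key : q₁ * (Real.log q₁ - Real.log q₂) + (1 - q₁) * (Real.log (1 - q₁) - Real.log (1 - q₂))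
        ≤ p * (Real.log q₁ - Real.log q₂) + (1 - p) * (Real.log (1 - q₁) - Real.log (1 - q₂)) := by
      have c1 : q₁ * (Real.log q₁ - Real.log q₂) ≤ p * (Real.log q₁ - Real.log q₂) :=
        mul_le_mul_of_nonpos_right hpq hA
      have c2 : (1 - q₁) * (Real.log (1 - q₁) - Real.log (1 - q₂))
          ≤ (1 - p) * (Real.log (1 - q₁) - Real.log (1 - q₂)) :=
        mul_le_mul_of_nonneg_right (by linarith) hB
      linarith
    have g : 0 ≤ q₁ * (Real.log q₁ - Real.log q₂)
        + (1 - q₁) * (Real.log (1 - q₁) - Real.log (1 - q₂)) := by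
      have := gibbs hq₁ hq₁1 hq₂0 hq₂
      rwa [Real.log_div (ne_of_gt hq₁) (ne_of_gt hq₂0),
        Real.log_div (by linarith) (by linarith)] at this
    have expand : bernKL p q₂ - bernKL p q₁
        = p * (Real.log q₁ - Real.log q₂) + (1 - p) * (Real.log (1 - q₁) - Real.log (1 - q₂)) := by
      simp only [bernKL]
      rw [Real.log_div (ne_of_gt hp0') (ne_of_gt hq₂0),
        Real.log_div (ne_of_gt hp0') (ne_of_gt hq₁),
        Real.log_div (by linarith : (1:ℝ) - p ≠ 0) (by linarith : (1:ℝ) - q₂ ≠ 0),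
        Real.log_div (by linarith : (1:ℝ) - p ≠ 0) (by linarith : (1:ℝ) - q₁ ≠ 0)]
      ring
    linarith

lemma bernKL_self {q : ℝ} (hq0 : 0 < q) (hq1 : q < 1) : bernKL q q = 0 := by
  simp [bernKL, div_self (ne_of_gt hq0), div_self (by linarith : (1:ℝ) - q ≠ 0)]

/-- `g_δ` is nondecreasing in `q` on `(0, 1)`. -/
theorem stmt_7 (δ : ℝ) (hδ : 0 < δ) :
    MonotoneOn (gKL δ) (Set.Ioo (0 : ℝ) 1) := by
  intro q₁ hq₁ q₂ hq₂ h
  have hbdd : ∀ q : ℝ, BddBelow {p : ℝ | p ∈ Set.Icc (0 : ℝ) 1 ∧ bernKL p q ≤ δ} := by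
    intro q
    exact ⟨0, fun p hp => hp.1.1⟩
  have hmem2 : q₂ ∈ {p : ℝ | p ∈ Set.Icc (0 : ℝ) 1 ∧ bernKL p q₂ ≤ δ} :=
    ⟨⟨hq₂.1.le, hq₂.2.le⟩, by rw [bernKL_self hq₂.1 hq₂.2]; exact hδ.le⟩
  apply le_csInf ⟨q₂, hmem2⟩
  intro p hp
  rcases le_or_gt p q₁ with hle | hlt
  · have : p ∈ {x : ℝ | x ∈ Set.Icc (0 : ℝ) 1 ∧ bernKL x q₁ ≤ δ} :=
      ⟨hp.1, le_trans (bernKL_mono hq₁.1 hq₂.2 h hp.1.1 hle) hp.2⟩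
    exact csInf_le (hbdd q₁) this
  · have : q₁ ∈ {x : ℝ | x ∈ Set.Icc (0 : ℝ) 1 ∧ bernKL x q₁ ≤ δ} :=
      ⟨⟨hq₁.1.le, hq₁.2.le⟩, by rw [bernKL_self hq₁.1 hq₁.2]; exact hδ.le⟩
    exact le_trans (csInf_le (hbdd q₁) this) hlt.le
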